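/- Let |ε| < 1 and consider the dispersion process with M = (1+ε)n/2 particles. Then for all t, t₀ ∈ ℕ, the number of unhappy particles satisfies U_{t₀+t} ≤_{sd} Z_t(U_{t₀}, ε), i.e. the binomial process started from U_{t₀} with parameter ε stochastically dominates U_{t₀+t}. -/

import Mathlib

open MeasureTheory ProbabilityTheory Filter Real Topology Finset
open scoped Classical
open scoped ENNReal

namespace Dispersion

/-- The uniform distribution on the `n` vertices `{0, …, n-1}`
(a junk Dirac measure at `0` if `n = 0`). -/
noncomputable def moveDist (n : ℕ) : Measure ℕ :=
  if h : 0 < n then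
    (PMF.uniformOfFinset (Finset.range n) (Finset.nonempty_range_iff.mpr h.ne')).toMeasure
  else Measure.dirac 0

/-- `IsDriver n μ G` says that the family `G (t, i)` of random destinations (of particle `i`
for the step from time `t` to time `t+1`) consists of independent random variables, each
uniformly distributed on the `n` vertices, on the probability space `(Ωs, μ)`.  Together
with `pos` below this encodes the dispersion process on the complete graph `K_n`
(with loops) with `M` particles. -/
structure IsDriver {Ωs : Type} [MeasurableSpace Ωs] (n : ℕ) (μ : Measure Ωs)
    (G : ℕ × ℕ → Ωs → ℕ) : Prop where
  isProb : IsProbabilityMeasure μ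
  meas : ∀ p, Measurable (G p)
  unif : ∀ p, μ.map (G p) = moveDist n
  indep : iIndepFun G μ

open Classical in
/-- The position of particle `i` (for `i < M`) at time `t` in the dispersion process:
all particles start on vertex `0`; a particle that is happy (alone on its vertex) stays
put, and an unhappy particle moves to the random destination prescribed by the driver. -/
noncomputable def pos {Ωs : Type} (M : ℕ) (G : ℕ × ℕ → Ωs → ℕ) (ω : Ωs) : ℕ → ℕ → ℕ
  | 0, _ => 0
  | t + 1, i =>
    if ∀ j, j < M → j ≠ i → pos M G ω t j ≠ pos M G ω t i then pos M G ω t i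
    else G (t, i) ω

open Classical in
/-- `U M G ω t` : the number of unhappy particles at time `t`. -/
noncomputable def U {Ωs : Type} (M : ℕ) (G : ℕ × ℕ → Ωs → ℕ) (ω : Ωs) (t : ℕ) : ℕ :=
  ((Finset.range M).filter
    (fun i => ∃ j, j < M ∧ j ≠ i ∧ pos M G ω t j = pos M G ω t i)).card

/-- The dispersion time `T_{n,M}`, as an element of `ℕ∞`. -/
noncomputable def T {Ωs : Type} (M : ℕ) (G : ℕ × ℕ → Ωs → ℕ) (ω : Ωs) : ℕ∞ :=
  sInf {m : ℕ∞ | ∃ t : ℕ, m = (t : ℕ∞) ∧ U M G ω t = 0}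

/-- The event `{T_{n,M} > r}` for a real threshold `r`. -/
def dispGT {Ωs : Type} (M : ℕ) (G : ℕ × ℕ → Ωs → ℕ) (r : ℝ) : Set Ωs :=
  {ω | ∀ t : ℕ, U M G ω t = 0 → r < (t : ℝ)}

/-- The event `{T_{n,M} ≤ r}` for a real threshold `r`. -/
def dispLE {Ωs : Type} (M : ℕ) (G : ℕ × ℕ → Ωs → ℕ) (r : ℝ) : Set Ωs :=
  {ω | ∃ t : ℕ, (t : ℝ) ≤ r ∧ U M G ω t = 0}

/-- The event `{T_{n,M} < r}` for a real threshold `r`. -/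
def dispLT {Ωs : Type} (M : ℕ) (G : ℕ × ℕ → Ωs → ℕ) (r : ℝ) : Set Ωs :=
  {ω | ∃ t : ℕ, (t : ℝ) < r ∧ U M G ω t = 0}

/-- `ε̂ = max {|ε|, e·n^{-1/2}}`. -/
noncomputable def ehat (n : ℕ) (e : ℝ) : ℝ :=
  max |e| (Real.exp 1 * (n : ℝ) ^ (-(1 / 2 : ℝ)))

/-- One step of the binomial process: from `m` individuals the next generation is
distributed as `2 · Bin(m, p)` (the parameter is truncated at `1`; in all uses below
`p ≤ 1` anyway). -/
noncomputable def binStep (p : ℝ≥0∞) (m : ℕ) : PMF ℕ :=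
  (PMF.binomial (min p 1).toNNReal
    (by have := ENNReal.toNNReal_mono ENNReal.one_ne_top (min_le_right p 1); simpa using this) m).map (fun k => 2 * (k : ℕ))

/-- The binomial process `Z_t` started at `m` with success parameter `p`:
`Z_0 = m` and `Z_{t+1} =_d 2 · Bin(Z_t, p)`. -/
noncomputable def Zpmf (p : ℝ≥0∞) : ℕ → ℕ → PMF ℕ
  | 0, m => PMF.pure m
  | t + 1, m => (Zpmf p t m).bind (binStep p)


-- ===== helper development =====


lemma measurableSet_all {X : Type*} [MeasurableSpace X] [Countable X]
    (h : ∀ x : X, MeasurableSet ({x} : Set X)) (s : Set X) : MeasurableSet s := by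
  rw [← Set.biUnion_of_singleton s]
  exact MeasurableSet.biUnion (Set.to_countable s) (fun x _ => h x)

lemma measurableSet_pi_nat {ι : Type*} [Finite ι] (s : Set (ι → ℕ)) : MeasurableSet s := by
  refine measurableSet_all (fun g => ?_) s
  have : ({g} : Set (ι → ℕ)) = ⋂ i, (fun f : ι → ℕ => f i) ⁻¹' {g i} := by
    ext f; simp [funext_iff, Set.mem_iInter]
  rw [this]
  have : Countable ι := Finite.to_countable
  exact MeasurableSet.iInter (fun i => (measurable_pi_apply i) (MeasurableSet.singleton _))

lemma measurable_from_pi_nat {ι : Type*} [Finite ι] {β : Type*} [MeasurableSpace β]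
    (f : (ι → ℕ) → β) : Measurable f := fun _ _ => measurableSet_pi_nat _

/-- Recursive binomial-tail function. -/
noncomputable def W (p q : ℝ≥0∞) : ℕ → ℕ → ℝ≥0∞
  | 0, y => if y = 0 then 1 else 0
  | k+1, y => q * W p q k y + p * W p q k (y-1)

variable {p q : ℝ≥0∞}

lemma W_y_zero (hpq : p + q = 1) (k : ℕ) : W p q k 0 = 1 := by
  induction k with
  | zero => simp [W]
  | succ k ih => simp only [W, Nat.zero_sub, ih, mul_one]; rw [add_comm]; exact hpq

lemma W_anti (k : ℕ) : ∀ {y y' : ℕ}, y ≤ y' → W p q k y' ≤ W p q k y := by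
  induction k with
  | zero =>
    intro y y' h
    by_cases hy : y = 0
    · subst hy; simp only [W]; split <;> simp
    · simp only [W]
      rw [if_neg (by omega)]
      exact zero_le
  | succ k ih =>
    intro y y' h
    exact add_le_add (mul_le_mul_right (ih h) q) (mul_le_mul_right (ih (by omega)) p)

lemma W_le_one (hpq : p + q = 1) (k y : ℕ) : W p q k y ≤ 1 := by
  simpa [W_y_zero hpq] using W_anti (p := p) (q := q) k (Nat.zero_le y)

lemma W_mono_k (hpq : p + q = 1) (k y : ℕ) : W p q k y ≤ W p q (k+1) y := by
  have : W p q k y = q * W p q k y + p * W p q k y := by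
    rw [← add_mul, add_comm q p, hpq, one_mul]
  rw [this]
  exact add_le_add le_rfl (mul_le_mul_right (W_anti k (Nat.sub_le y 1)) p)

/-- Explicit binomial tail sum. -/
noncomputable def Tb (p q : ℝ≥0∞) (k y : ℕ) : ℝ≥0∞ :=
  ∑ j ∈ Finset.range (k+1), if y ≤ j then (k.choose j : ℝ≥0∞) * p^j * q^(k-j) else 0

lemma Tb_zero (y : ℕ) : Tb p q 0 y = if y = 0 then 1 else 0 := by
  simp [Tb, Nat.le_zero]

lemma Tb_y_zero (hpq : p + q = 1) (k : ℕ) : Tb p q k 0 = 1 := by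
  have := add_pow p q k
  rw [hpq, one_pow] at this
  rw [Tb]
  rw [this]
  refine Finset.sum_congr rfl (fun j hj => ?_)
  rw [if_pos (Nat.zero_le _)]
  ring

lemma Tb_succ (k y : ℕ) (hy : 1 ≤ y) :
    Tb p q (k+1) y = q * Tb p q k y + p * Tb p q k (y-1) := by
  rw [Tb, Finset.sum_range_succ']
  rw [if_neg (by omega)]
  have hsplit : ∀ i ∈ Finset.range (k+1),
      (if y ≤ i+1 then ((k+1).choose (i+1) : ℝ≥0∞) * p^(i+1) * q^(k+1-(i+1)) else 0)
      = (if y ≤ i+1 then ((k.choose (i+1) : ℝ≥0∞)) * p^(i+1) * q^(k-i) else 0)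
        + (if y ≤ i+1 then ((k.choose i : ℝ≥0∞)) * p^(i+1) * q^(k-i) else 0) := by
    intro i _
    have : (k+1) - (i+1) = k - i := by omega
    rw [this, Nat.choose_succ_succ']
    push_cast
    split <;> ring
  rw [Finset.sum_congr rfl hsplit, Finset.sum_add_distrib, add_zero]
  congr 1
  · -- Σ₂ = q * Tb k y
    set F : ℕ → ℝ≥0∞ := fun j => if y ≤ j then (k.choose j : ℝ≥0∞) * p^j * q^(k+1-j) else 0
      with hF
    have hR1 : ∑ j ∈ Finset.range (k+2), F j = ∑ i ∈ Finset.range (k+1), F (i+1) + F 0 :=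
      Finset.sum_range_succ' F (k+1)
    have hF0 : F 0 = 0 := by rw [hF]; simp only []; rw [if_neg (by omega)]
    have hLHS : ∑ i ∈ Finset.range (k+1),
        (if y ≤ i+1 then ((k.choose (i+1):ℝ≥0∞)) * p^(i+1) * q^(k-i) else 0)
        = ∑ i ∈ Finset.range (k+1), F (i+1) := by
      refine Finset.sum_congr rfl fun i hi => ?_
      rw [hF]
      simp only [show k+1-(i+1) = k - i from by omega]
    have hR2 : ∑ j ∈ Finset.range (k+2), F j = ∑ j ∈ Finset.range (k+1), F j + F (k+1) :=
      Finset.sum_range_succ F (k+1)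
    have hFtop : F (k+1) = 0 := by
      rw [hF]; simp only [Nat.choose_succ_self, Nat.cast_zero, zero_mul, ite_self]
    have hq : q * Tb p q k y = ∑ j ∈ Finset.range (k+1), F j := by
      rw [Tb, Finset.mul_sum]
      refine Finset.sum_congr rfl fun j hj => ?_
      rw [Finset.mem_range] at hj
      rw [hF]
      simp only [show k+1-j = (k-j)+1 from by omega]
      split <;> ring
    rw [hLHS, hq]
    rw [← add_zero (∑ i ∈ Finset.range (k+1), F (i+1)), ← hF0, ← hR1, hR2, hFtop, add_zero]
  · -- Σ₁ = p * Tb k (y-1)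
    rw [Tb, Finset.mul_sum]
    refine Finset.sum_congr rfl (fun i hi => ?_)
    have hiff : (y ≤ i + 1) = (y - 1 ≤ i) := by
      apply propext; omega
    simp only [hiff]
    split <;> ring

lemma W_eq_Tb (hpq : p + q = 1) (k y : ℕ) : W p q k y = Tb p q k y := by
  induction k generalizing y with
  | zero => rw [Tb_zero]; rfl
  | succ k ih =>
    by_cases hy : y = 0
    · subst hy; rw [W_y_zero hpq, Tb_y_zero hpq]
    · rw [Tb_succ k y (by omega)]
      simp only [W, ih]




lemma measAll {X : Type*} [MeasurableSpace X] (hX : ‹MeasurableSpace X› = ⊤) (s : Set X) :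
    MeasurableSet s := by rw [hX]; exact MeasurableSpace.measurableSet_top

lemma measNat (s : Set ℕ) : MeasurableSet s := measAll rfl s

lemma measFin {n : ℕ} (s : Set (Fin n)) : MeasurableSet s := measAll rfl s

lemma binomial_tail (p : NNReal) (hp : p ≤ 1) (k y : ℕ) :
    (PMF.binomial p hp k).toMeasure {j : Fin (k+1) | y ≤ (j : ℕ)}
      = Tb (p : ℝ≥0∞) (1-(p : ℝ≥0∞)) k y := by
  have hfin : ∀ f : ℕ → ℝ≥0∞, (∑ j : Fin (k+1), f (j:ℕ)) = ∑ j ∈ Finset.range (k+1), f j :=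
    fun f => Fin.sum_univ_eq_sum_range f (k+1)
  rw [PMF.toMeasure_apply _ (measFin _), tsum_fintype, Tb,
    ← hfin (fun m => if y ≤ m then (k.choose m : ℝ≥0∞) * (p : ℝ≥0∞)^m * (1-(p : ℝ≥0∞))^(k-m)
      else 0)]
  refine Finset.sum_congr rfl fun j _ => ?_
  rw [Set.indicator_apply]
  simp only [Set.mem_setOf_eq, PMF.binomial_apply, Fin.val_last]
  split
  · ring
  · rfl

lemma binStep_tail (p : ℝ≥0∞) (hp : p ≤ 1) (k z : ℕ) :
    (binStep p k).toMeasure {x : ℕ | z ≤ x} = Tb p (1-p) k ((z+1)/2) := by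
  have hb : binStep p k = PMF.map ((fun x:ℕ => 2*x) ∘ (fun a : Fin (k+1) => (a:ℕ)))
      (PMF.binomial (min p 1).toNNReal
        (by have := ENNReal.toNNReal_mono ENNReal.one_ne_top (min_le_right p 1); simpa using this)
        k) := by
    rw [binStep, ← PMF.map_comp]
    rfl
  rw [hb, PMF.toMeasure_map_apply _ _ _ measurable_from_top (measNat _),
    show ((fun x:ℕ => 2*x) ∘ (fun a : Fin (k+1) => (a:ℕ))) ⁻¹' {x : ℕ | z ≤ x}
        = {j : Fin (k+1) | (z+1)/2 ≤ (j:ℕ)} from by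
      ext j
      simp only [Set.mem_preimage, Function.comp_apply, Set.mem_setOf_eq]
      omega]
  rw [binomial_tail _ _ k ((z+1)/2),
    ENNReal.coe_toNNReal (ne_top_of_le_ne_top ENNReal.one_ne_top (min_le_right p 1)),
    min_eq_left hp]

lemma Zpmf_tail_zero (p : ℝ≥0∞) (m z : ℕ) :
    (Zpmf p 0 m).toMeasure {x : ℕ | z ≤ x} = if z ≤ m then 1 else 0 := by
  rw [Zpmf, PMF.toMeasure_pure_apply _ _ (measNat _)]
  simp [Set.mem_setOf_eq]

lemma Zpmf_tail_succ (p : ℝ≥0∞) (hp : p ≤ 1) (t m z : ℕ) :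
    (Zpmf p (t+1) m).toMeasure {x : ℕ | z ≤ x}
      = ∑' k : ℕ, Zpmf p t m k * Tb p (1-p) k ((z+1)/2) := by
  rw [Zpmf, PMF.toMeasure_bind_apply _ _ _ (measNat _)]
  exact tsum_congr fun k => by rw [binStep_tail p hp k z]

/-- Layer-cake comparison. -/
lemma layercake (a b : ℕ → ℝ≥0∞) (g : ℕ → ℝ≥0∞) (hmono : Monotone g) (hfin : ∀ k, g k ≠ ⊤)
    (hab : ∑' k, a k = ∑' k, b k)
    (htail : ∀ y : ℕ, (∑' k, a k * (if y ≤ k then 1 else 0))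
      ≤ ∑' k, b k * (if y ≤ k then 1 else 0)) :
    ∑' k, a k * g k ≤ ∑' k, b k * g k := by
  set d : ℕ → ℝ≥0∞ := fun y => g (y+1) - g y with hd
  have hgd : ∀ k, g k = g 0 + ∑ y ∈ Finset.range k, d y := by
    intro k
    induction k with
    | zero => simp
    | succ k ih =>
      rw [Finset.sum_range_succ, ← add_assoc, ← ih, hd]
      exact (add_tsub_cancel_of_le (hmono (Nat.le_succ k))).symm
  have key : ∀ c : ℕ → ℝ≥0∞, (∑' k, c k * g k)
      = g 0 * (∑' k, c k)
        + ∑' y : ℕ, d y * (∑' k, c k * (if y+1 ≤ k then 1 else 0)) := by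
    intro c
    have h2 : ∀ k, c k * g k
        = c k * g 0 + ∑' y : ℕ, d y * (c k * (if y+1 ≤ k then 1 else 0)) := by
      intro k
      have hsum : (∑ y ∈ Finset.range k, d y)
          = ∑' y : ℕ, d y * (if y+1 ≤ k then 1 else 0) := by
        rw [tsum_eq_sum (s := Finset.range k) (fun y hy => by
          rw [if_neg (fun h => hy (Finset.mem_range.2 (by omega))), mul_zero])]
        refine Finset.sum_congr rfl fun y hy => ?_
        rw [Finset.mem_range] at hy
        rw [if_pos (by omega : y + 1 ≤ k), mul_one]
      rw [hgd k, mul_add, hsum, ← ENNReal.tsum_mul_left]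
      congr 1
      exact tsum_congr fun y => by ring
    calc (∑' k, c k * g k)
        = ∑' k, (c k * g 0 + ∑' y : ℕ, d y * (c k * (if y+1 ≤ k then 1 else 0))) :=
          tsum_congr h2
      _ = (∑' k, c k * g 0) + ∑' k, ∑' y : ℕ, d y * (c k * (if y+1 ≤ k then 1 else 0)) :=
          ENNReal.tsum_add
      _ = g 0 * (∑' k, c k)
          + ∑' y : ℕ, d y * (∑' k, c k * (if y+1 ≤ k then 1 else 0)) := by
          congr 1
          · rw [ENNReal.tsum_mul_right, mul_comm]
          · rw [ENNReal.tsum_comm]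
            exact tsum_congr fun y => by rw [← ENNReal.tsum_mul_left]
  rw [key a, key b, hab]
  exact add_le_add le_rfl (ENNReal.tsum_le_tsum fun y => mul_le_mul_right (htail (y+1)) _)



variable (M : ℕ)

def happyP (c : ℕ → ℕ) (i : ℕ) : Prop := ∀ j, j < M → j ≠ i → c j ≠ c i

noncomputable def nextC (c w : ℕ → ℕ) : ℕ → ℕ := fun i => if happyP M c i then c i else w i

noncomputable def movers (c : ℕ → ℕ) : Finset ℕ := (range M).filter (fun i => ¬ happyP M c i)

noncomputable def uc (c : ℕ → ℕ) : ℕ :=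
  ((range M).filter (fun i => ∃ j, j < M ∧ j ≠ i ∧ c j = c i)).card

noncomputable def Sset (c : ℕ → ℕ) : Finset ℕ := ((range M).filter (happyP M c)).image c

lemma not_happyP_iff (c : ℕ → ℕ) (i : ℕ) :
    (¬ happyP M c i) ↔ ∃ j, j < M ∧ j ≠ i ∧ c j = c i := by
  rw [happyP]; push_neg; rfl

lemma uc_eq_card_movers (c : ℕ → ℕ) : uc M c = (movers M c).card := by
  unfold uc movers
  congr 1
  ext i
  simp only [mem_filter, and_congr_right_iff]
  intro _
  rw [not_happyP_iff]

/-- bad movers w.r.t. a forbidden set `D` and a set of movers `I`. -/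
noncomputable def badFin (D : Finset ℕ) (I : Finset ℕ) (w : ℕ → ℕ) : Finset ℕ :=
  I.filter (fun i => w i ∈ D ∨ ∃ j ∈ I, j < i ∧ w j = w i)

noncomputable def badF (c w : ℕ → ℕ) : Finset ℕ := badFin (Sset M c) (movers M c) w

/-- Key deterministic bound: the number of unhappy particles after the move is at most
twice the number of "bad" movers. -/
lemma detD (c w : ℕ → ℕ) : uc M (nextC M c w) ≤ 2 * (badF M c w).card := by
  set c' := nextC M c w with hc'
  set UN := (range M).filter (fun i => ∃ j, j < M ∧ j ≠ i ∧ c' j = c' i) with hUN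
  set B := badF M c w with hB
  have memUN : ∀ i, i ∈ UN ↔ (i < M ∧ ∃ j, j < M ∧ j ≠ i ∧ c' j = c' i) := by
    intro i; rw [hUN, Finset.mem_filter, Finset.mem_range]
  have memB : ∀ i, i ∈ B ↔ ((i < M ∧ ¬ happyP M c i) ∧
      (w i ∈ Sset M c ∨ ∃ j ∈ movers M c, j < i ∧ w j = w i)) := by
    intro i
    rw [hB, badF, badFin, Finset.mem_filter, movers, Finset.mem_filter, Finset.mem_range]
  have memMov : ∀ i, i ∈ movers M c ↔ (i < M ∧ ¬ happyP M c i) := by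
    intro i; rw [movers, Finset.mem_filter, Finset.mem_range]
  have hBsub : B ⊆ range M := fun i hi => Finset.mem_range.2 ((memB i).1 hi).1.1
  have hucUN : uc M c' = UN.card := rfl
  rw [hucUN]
  have h1 : UN.card = ∑ v ∈ (range M).image c', (UN.filter (fun i => c' i = v)).card :=
    Finset.card_eq_sum_card_fiberwise (fun x hx =>
      Finset.mem_image_of_mem c' (Finset.mem_range.2 ((memUN x).1 hx).1))
  have h2 : B.card = ∑ v ∈ (range M).image c', (B.filter (fun i => c' i = v)).card :=
    Finset.card_eq_sum_card_fiberwise (fun x hx => Finset.mem_image_of_mem c' (hBsub hx))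
  rw [h1, h2, Finset.mul_sum]
  refine Finset.sum_le_sum fun v _ => ?_
  set Fv := (range M).filter (fun i => c' i = v) with hFv
  have memFv : ∀ i, i ∈ Fv ↔ (i < M ∧ c' i = v) := by
    intro i; rw [hFv, Finset.mem_filter, Finset.mem_range]
  by_cases hcard : Fv.card ≤ 1
  · -- no collisions at v
    have hempty : UN.filter (fun i => c' i = v) = ∅ := by
      rw [Finset.eq_empty_iff_forall_notMem]
      intro i hi
      rw [Finset.mem_filter] at hi
      obtain ⟨hiUN, hciv⟩ := hi
      obtain ⟨hiM, j, hjM, hji, hcc⟩ := (memUN i).1 hiUN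
      have hiF : i ∈ Fv := (memFv i).2 ⟨hiM, hciv⟩
      have hjF : j ∈ Fv := (memFv j).2 ⟨hjM, hcc.trans hciv⟩
      have : 2 ≤ Fv.card := by
        have hss : ({j, i} : Finset ℕ) ⊆ Fv := by
          intro x hx; simp only [Finset.mem_insert, Finset.mem_singleton] at hx
          rcases hx with rfl | rfl
          exacts [hjF, hiF]
        calc 2 = ({j, i} : Finset ℕ).card := (Finset.card_pair hji).symm
          _ ≤ Fv.card := Finset.card_le_card hss
      omega
    rw [hempty]
    simp
  · push_neg at hcard
    have hUNv : UN.filter (fun i => c' i = v) = Fv := by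
      apply Finset.Subset.antisymm
      · intro i hi
        rw [Finset.mem_filter] at hi
        exact (memFv i).2 ⟨((memUN i).1 hi.1).1, hi.2⟩
      · intro i hi
        obtain ⟨hiM, hciv⟩ := (memFv i).1 hi
        obtain ⟨j, hjF, hji⟩ := Finset.exists_mem_ne hcard i
        obtain ⟨hjM, hcjv⟩ := (memFv j).1 hjF
        rw [Finset.mem_filter]
        exact ⟨(memUN i).2 ⟨hiM, j, hjM, hji, hcjv.trans hciv.symm⟩, hciv⟩
    rw [hUNv]
    -- two subcases: a happy particle sits at v, or not
    have key : ∃ i₀ ∈ Fv, Fv \ {i₀} ⊆ B.filter (fun i => c' i = v) := by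
      by_cases hhappy : ∃ h ∈ Fv, happyP M c h
      · obtain ⟨h, hhF, hh⟩ := hhappy
        obtain ⟨hhM, hchv⟩ := (memFv h).1 hhF
        refine ⟨h, hhF, fun i hi => ?_⟩
        rw [Finset.mem_sdiff, Finset.mem_singleton] at hi
        obtain ⟨hiF, hih⟩ := hi
        obtain ⟨hiM, hciv⟩ := (memFv i).1 hiF
        have hiunh : ¬ happyP M c i := by
          intro hap
          have h1' : c' i = c i := by rw [hc', nextC, if_pos hap]
          have h2' : c' h = c h := by rw [hc', nextC, if_pos hh]
          exact hh i hiM hih (by rw [← h1', hciv, ← hchv, h2'])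
        have hiw : c' i = w i := by rw [hc', nextC, if_neg hiunh]
        rw [Finset.mem_filter]
        refine ⟨(memB i).2 ⟨⟨hiM, hiunh⟩, Or.inl ?_⟩, hciv⟩
        rw [Sset, Finset.mem_image]
        refine ⟨h, Finset.mem_filter.2 ⟨Finset.mem_range.2 hhM, hh⟩, ?_⟩
        rw [← hiw, hciv, ← hchv, hc', nextC, if_pos hh]
      · push_neg at hhappy
        have hne : Fv.Nonempty := Finset.card_pos.1 (by omega)
        refine ⟨Fv.min' hne, Finset.min'_mem _ _, fun i hi => ?_⟩
        rw [Finset.mem_sdiff, Finset.mem_singleton] at hi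
        obtain ⟨hiF, hne'⟩ := hi
        have h0F := Finset.min'_mem Fv hne
        set i₀ := Fv.min' hne
        obtain ⟨hiM, hciv⟩ := (memFv i).1 hiF
        obtain ⟨h0M, hc0v⟩ := (memFv i₀).1 h0F
        have hiunh : ¬ happyP M c i := hhappy i hiF
        have h0unh : ¬ happyP M c i₀ := hhappy i₀ h0F
        have hiw : c' i = w i := by rw [hc', nextC, if_neg hiunh]
        have h0w : c' i₀ = w i₀ := by rw [hc', nextC, if_neg h0unh]
        rw [Finset.mem_filter]
        refine ⟨(memB i).2 ⟨⟨hiM, hiunh⟩, Or.inr ⟨i₀, (memMov i₀).2 ⟨h0M, h0unh⟩, ?_, ?_⟩⟩, hciv⟩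
        · exact lt_of_le_of_ne (Finset.min'_le Fv i hiF) (Ne.symm hne')
        · rw [← h0w, ← hiw, hc0v, hciv]
    obtain ⟨i₀, hi₀, hsub⟩ := key
    have hc1 : Fv.card - 1 ≤ (B.filter (fun i => c' i = v)).card := by
      calc Fv.card - 1 = (Fv \ {i₀}).card := by
            rw [Finset.card_sdiff_of_subset (Finset.singleton_subset_iff.2 hi₀), Finset.card_singleton]
        _ ≤ _ := Finset.card_le_card hsub
    omega

/-- Counting bad movers via the list of destinations in decreasing index order. -/
def listBadCount (D : Finset ℕ) : List ℕ → ℕ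
  | [] => 0
  | x :: l => listBadCount D l + (if x ∈ D ∨ x ∈ l then 1 else 0)

lemma badFin_card_eq (D : Finset ℕ) (w : ℕ → ℕ) :
    ∀ l : List ℕ, l.Pairwise (· > ·) →
      (badFin D l.toFinset w).card = listBadCount D (l.map w) := by
  intro l
  induction l with
  | nil => intro _; simp [badFin, listBadCount]
  | cons a l ih =>
    intro hs
    have hgt : ∀ b ∈ l, a > b := fun b hb => List.rel_of_pairwise_cons hs hb
    have hal : a ∉ l := fun h => lt_irrefl a (hgt a h)
    have hs' : l.Pairwise (· > ·) := hs.of_cons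
    have htF : (a :: l).toFinset = insert a l.toFinset := by simp
    rw [htF]
    have hfilter : badFin D (insert a l.toFinset) w
        = (if (w a ∈ D ∨ w a ∈ l.map w) then insert a (badFin D l.toFinset w)
            else badFin D l.toFinset w) := by
      rw [badFin, Finset.filter_insert]
      have hpa : (w a ∈ D ∨ ∃ j ∈ insert a l.toFinset, j < a ∧ w j = w a)
          ↔ (w a ∈ D ∨ w a ∈ l.map w) := by
        apply or_congr_right
        constructor
        · rintro ⟨j, hj, hja, hw⟩
          rw [Finset.mem_insert] at hj
          rcases hj with rfl | hj
          · omega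
          · rw [List.mem_toFinset] at hj
            rw [← hw]; exact List.mem_map_of_mem (f := w) hj
        · intro hmem
          rw [List.mem_map] at hmem
          obtain ⟨j, hj, hw⟩ := hmem
          exact ⟨j, Finset.mem_insert_of_mem (List.mem_toFinset.2 hj), hgt j hj, hw⟩
      have hcongr : (l.toFinset).filter
            (fun i => w i ∈ D ∨ ∃ j ∈ insert a l.toFinset, j < i ∧ w j = w i)
          = badFin D l.toFinset w := by
        rw [badFin]
        apply Finset.filter_congr
        intro i hi
        rw [List.mem_toFinset] at hi
        have hia : i < a := hgt i hi
        apply or_congr_right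
        constructor
        · rintro ⟨j, hj, hji, hw⟩
          rw [Finset.mem_insert] at hj
          rcases hj with rfl | hj
          · omega
          · exact ⟨j, hj, hji, hw⟩
        · rintro ⟨j, hj, hji, hw⟩
          exact ⟨j, Finset.mem_insert_of_mem hj, hji, hw⟩
      rw [hcongr]
      simp only [hpa]
    rw [hfilter]
    have hanb : a ∉ badFin D l.toFinset w := fun h => by
      have := Finset.mem_of_mem_filter a h
      rw [List.mem_toFinset] at this
      exact hal this
    by_cases hc : (w a ∈ D ∨ w a ∈ l.map w)
    · rw [if_pos hc, Finset.card_insert_of_notMem hanb, ih hs']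
      show _ = listBadCount D (l.map w) + _
      rw [if_pos hc]
    · rw [if_neg hc, ih hs']
      show _ = listBadCount D (l.map w) + _
      rw [if_neg hc, add_zero]

lemma badF_card_eq (c w : ℕ → ℕ) :
    (badF M c w).card
      = listBadCount (Sset M c) ((((movers M c).sort (· ≤ ·)).reverse).map w) := by
  rw [badF, ← badFin_card_eq]
  · congr 1
    rw [List.toFinset_reverse, Finset.sort_toFinset]
  · rw [List.pairwise_reverse]
    have := (Finset.sortedLT_sort (movers M c)).pairwise
    exact this.imp (fun h => h)


-- ===== end helpers =====


-- ===== probabilistic plumbing =====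

variable {Ωs : Type} [MeasurableSpace Ωs]

def rowMap (G : ℕ × ℕ → Ωs → ℕ) (Tf : Finset (ℕ×ℕ)) : Ωs → (↥Tf → ℕ) :=
  fun ω q => G q ω

noncomputable def restMap (Tf : Finset (ℕ×ℕ)) (h : ↥Tf → ℕ) : ℕ×ℕ → ℕ :=
  fun q => if hq : q ∈ Tf then h ⟨q,hq⟩ else 0

lemma restMap_rowMap (G : ℕ × ℕ → Ωs → ℕ) (Tf : Finset (ℕ×ℕ)) (ω : Ωs) {x : ℕ×ℕ}
    (hx : x ∈ Tf) : restMap Tf (rowMap G Tf ω) x = G x ω := dif_pos hx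

lemma measurable_rowMap (G : ℕ × ℕ → Ωs → ℕ) (hm : ∀ q, Measurable (G q))
    (Tf : Finset (ℕ×ℕ)) : Measurable (rowMap G Tf) :=
  measurable_pi_lambda _ fun q => hm q

lemma partition_tsum {X : Type*} [Countable X] (μ : Measure Ωs) (f : Ωs → X) (E : Set Ωs)
    (hme : ∀ x : X, MeasurableSet (E ∩ f ⁻¹' {x})) :
    μ E = ∑' x : X, μ (E ∩ f ⁻¹' {x}) := by
  have hdisj : Pairwise (Function.onFun Disjoint (fun x => E ∩ f ⁻¹' {x})) := by
    intro x y hxy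
    refine Set.disjoint_left.mpr ?_
    rintro ω ⟨_, hx⟩ ⟨_, hy⟩
    rw [Set.mem_preimage, Set.mem_singleton_iff] at hx hy
    exact hxy (hx ▸ hy ▸ rfl)
  conv_lhs => rw [show E = ⋃ x : X, (E ∩ f ⁻¹' {x}) by ext ω; simp]
  exact measure_iUnion hdisj hme

lemma indep_pre {n : ℕ} {μ : Measure Ωs} {G : ℕ × ℕ → Ωs → ℕ} (hG : IsDriver n μ G)
    {Sf Tf : Finset (ℕ×ℕ)} (hd : Disjoint Sf Tf)
    (A : Set (↥Sf → ℕ)) (B : Set (↥Tf → ℕ)) :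
    μ (rowMap G Sf ⁻¹' A ∩ rowMap G Tf ⁻¹' B)
      = μ (rowMap G Sf ⁻¹' A) * μ (rowMap G Tf ⁻¹' B) :=
  (hG.indep.indepFun_finset Sf Tf hd hG.meas).measure_inter_preimage_eq_mul
    A B (measurableSet_pi_nat A) (measurableSet_pi_nat B)

lemma measure_G_mem {n : ℕ} {μ : Measure Ωs} {G : ℕ × ℕ → Ωs → ℕ} (hG : IsDriver n μ G)
    (hn : 0 < n) (q : ℕ×ℕ) (D : Finset ℕ) :
    μ {ω | G q ω ∈ D} ≤ (D.card : ℝ≥0∞) / n := by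
  have h1 : {ω | G q ω ∈ D} = G q ⁻¹' {x | x ∈ D} := rfl
  rw [h1, ← Measure.map_apply (hG.meas q) (measNat _), hG.unif q, moveDist, dif_pos hn,
    PMF.toMeasure_uniformOfFinset_apply _ _ (measNat _)]
  rw [Finset.card_range]
  refine ENNReal.div_le_div_right ?_ _
  refine Nat.cast_le.2 (Finset.card_le_card ?_)
  intro x hx
  simp only [Finset.mem_filter, Set.mem_setOf_eq] at hx
  exact hx.2

lemma listBadCount_cons (S : Finset ℕ) (x : ℕ) (l : List ℕ) :
    listBadCount S (x :: l) = listBadCount S l + (if x ∈ S ∨ x ∈ l then 1 else 0) := rfl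

/-- Sequential tail bound: the count of "bad" fresh uniform draws is stochastically
dominated by a binomial. -/
lemma seq {n : ℕ} (hn : 0 < n) {M : ℕ} (hMn : M ≤ n) {μ : Measure Ωs}
    {G : ℕ × ℕ → Ωs → ℕ} (hG : IsDriver n μ G) (S : Finset ℕ) :
    ∀ (L : List (ℕ×ℕ)) (y : ℕ), L.Nodup → S.card + L.length ≤ M →
    μ {ω | y ≤ listBadCount S (L.map (fun x => G x ω))}
      ≤ W ((M:ℝ≥0∞)/n) (((n-M:ℕ):ℝ≥0∞)/n) L.length y := by
  have hnn : (n:ℝ≥0∞) ≠ 0 := by exact_mod_cast Nat.cast_ne_zero.2 hn.ne'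
  have hnt : (n:ℝ≥0∞) ≠ ⊤ := ENNReal.natCast_ne_top n
  set p : ℝ≥0∞ := (M:ℝ≥0∞)/n with hp
  set q : ℝ≥0∞ := ((n-M:ℕ):ℝ≥0∞)/n with hq
  have hpq : p + q = 1 := by
    rw [hp, hq, ENNReal.div_add_div_same]
    rw [show ((M:ℝ≥0∞) + ((n-M:ℕ):ℝ≥0∞)) = ((n:ℕ):ℝ≥0∞) by
      rw [← Nat.cast_add]; congr 1; omega]
    exact ENNReal.div_self hnn hnt
  have hprob := hG.isProb
  -- measurability of bad-count events
  have hmeasE : ∀ (L : List (ℕ×ℕ)) (y : ℕ),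
      MeasurableSet {ω : Ωs | y ≤ listBadCount S (L.map (fun x => G x ω))} := by
    intro L y
    have heq : {ω : Ωs | y ≤ listBadCount S (L.map (fun x => G x ω))}
        = rowMap G L.toFinset ⁻¹'
          {h | y ≤ listBadCount S (L.map (restMap L.toFinset h))} := by
      have hmap : ∀ ω : Ωs, L.map (restMap L.toFinset (rowMap G L.toFinset ω))
          = L.map (fun x => G x ω) := fun ω => List.map_congr_left
            (fun x hx => restMap_rowMap G L.toFinset ω (List.mem_toFinset.2 hx))
      ext ω
      simp only [Set.mem_preimage, Set.mem_setOf_eq]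
      rw [hmap ω]
    rw [heq]
    exact measurable_rowMap G hG.meas _ (measurableSet_pi_nat _)
  have hmeasf : ∀ (L : List (ℕ×ℕ)) (u : List ℕ),
      MeasurableSet {ω : Ωs | L.map (fun x => G x ω) = u} := by
    intro L u
    have heq : {ω : Ωs | L.map (fun x => G x ω) = u}
        = rowMap G L.toFinset ⁻¹' {h | L.map (restMap L.toFinset h) = u} := by
      have hmap : ∀ ω : Ωs, L.map (restMap L.toFinset (rowMap G L.toFinset ω))
          = L.map (fun x => G x ω) := fun ω => List.map_congr_left
            (fun x hx => restMap_rowMap G L.toFinset ω (List.mem_toFinset.2 hx))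
      ext ω
      simp only [Set.mem_preimage, Set.mem_setOf_eq]
      rw [hmap ω]
    rw [heq]
    exact measurable_rowMap G hG.meas _ (measurableSet_pi_nat _)
  intro L
  induction L with
  | nil =>
    intro y _ _
    cases y with
    | zero =>
      have : {ω : Ωs | 0 ≤ listBadCount S ([].map (fun x => G x ω))} = Set.univ := by
        ext ω; simp
      rw [this, measure_univ, List.length_nil]
      simp [W]
    | succ y =>
      have : {ω : Ωs | y+1 ≤ listBadCount S ([].map (fun x => G x ω))} = ∅ := by
        ext ω; simp [listBadCount]
      rw [this, measure_empty]
      exact zero_le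
  | cons q₀ L' ih =>
    intro y hnd hcard
    have hnd' : L'.Nodup := (List.nodup_cons.1 hnd).2
    have hq0 : q₀ ∉ L' := (List.nodup_cons.1 hnd).1
    have hcard' : S.card + L'.length ≤ M := by
      simp only [List.length_cons] at hcard; omega
    set f : Ωs → List ℕ := fun ω => L'.map (fun x => G x ω) with hf
    set b : List ℕ → ℕ := fun u => listBadCount S u with hb
    set E : Set Ωs := {ω | y ≤ listBadCount S ((q₀ :: L').map (fun x => G x ω))} with hE
    -- the partition of E over the values of f
    have hpart : μ E = ∑' u : List ℕ, μ (E ∩ f ⁻¹' {u}) :=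
      partition_tsum μ f E (fun u => (hmeasE _ y).inter (hmeasf L' u))
    -- description of the slices
    have hEu : ∀ u : List ℕ, E ∩ f ⁻¹' {u}
        = {ω | y ≤ b u + (if G q₀ ω ∈ S ∨ G q₀ ω ∈ u then 1 else 0)} ∩ f ⁻¹' {u} := by
      intro u
      ext ω
      simp only [hE, Set.mem_inter_iff, Set.mem_setOf_eq, Set.mem_preimage,
        Set.mem_singleton_iff]
      constructor
      · rintro ⟨h1, h2⟩
        refine ⟨?_, h2⟩
        rw [List.map_cons, listBadCount_cons] at h1
        rw [show L'.map (fun x => G x ω) = u from h2] at h1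
        exact h1
      · rintro ⟨h1, h2⟩
        refine ⟨?_, h2⟩
        rw [List.map_cons, listBadCount_cons,
          show L'.map (fun x => G x ω) = u from h2]
        exact h1
    -- single-coordinate event as preimage
    have hq0pre : ∀ D : Finset ℕ, {ω : Ωs | G q₀ ω ∈ D}
        = rowMap G {q₀} ⁻¹' {h | h ⟨q₀, Finset.mem_singleton_self q₀⟩ ∈ D} := by
      intro D; ext ω; simp [rowMap]
    have hfpre : ∀ u : List ℕ, f ⁻¹' {u}
        = rowMap G L'.toFinset ⁻¹' {h | L'.map (restMap L'.toFinset h) = u} := by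
      intro u
      have hmap : ∀ ω : Ωs, L'.map (restMap L'.toFinset (rowMap G L'.toFinset ω))
          = L'.map (fun x => G x ω) := fun ω => List.map_congr_left
            (fun x hx => restMap_rowMap G L'.toFinset ω (List.mem_toFinset.2 hx))
      ext ω
      simp only [Set.mem_preimage, Set.mem_singleton_iff, Set.mem_setOf_eq, hf]
      rw [hmap ω]
    -- per-slice bound
    have hbound : ∀ u : List ℕ, μ (E ∩ f ⁻¹' {u})
        ≤ q * ((if y ≤ b u then 1 else 0) * μ (f ⁻¹' {u}))
          + p * ((if y - 1 ≤ b u then 1 else 0) * μ (f ⁻¹' {u})) := by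
      intro u
      by_cases hc1 : y ≤ b u
      · rw [if_pos hc1, if_pos (by omega), one_mul, ← add_mul,
          show q + p = 1 from by rw [add_comm]; exact hpq, one_mul]
        exact measure_mono Set.inter_subset_right
      · by_cases hc2 : y = b u + 1
        · -- the interesting case
          have hEu2 : E ∩ f ⁻¹' {u} = {ω | G q₀ ω ∈ S ∪ u.toFinset} ∩ f ⁻¹' {u} := by
            rw [hEu u]
            ext ω
            simp only [Set.mem_inter_iff, Set.mem_setOf_eq, Finset.mem_union,
              List.mem_toFinset]
            constructor
            · rintro ⟨h1, h2⟩
              refine ⟨?_, h2⟩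
              by_contra hno
              rw [if_neg hno] at h1
              omega
            · rintro ⟨h1, h2⟩
              rw [if_pos h1]
              exact ⟨by omega, h2⟩
          rw [hEu2, hq0pre (S ∪ u.toFinset), hfpre u,
            indep_pre hG (by simpa using hq0) _ _, ← hq0pre, ← hfpre]
          rw [if_neg hc1, if_pos (by omega), zero_mul, mul_zero, zero_add, one_mul]
          by_cases hzero : μ (f ⁻¹' {u}) = 0
          · rw [hzero, mul_zero, mul_zero]
          · have hne : (f ⁻¹' {u}).Nonempty := by
              by_contra hempty
              rw [Set.not_nonempty_iff_eq_empty] at hempty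
              rw [hempty] at hzero
              exact hzero (measure_empty)
            obtain ⟨ω₀, hω₀⟩ := hne
            have hulen : u.length = L'.length := by
              rw [Set.mem_preimage, Set.mem_singleton_iff] at hω₀
              rw [← hω₀, hf]
              simp
            refine mul_le_mul_left ?_ _
            calc μ {ω | G q₀ ω ∈ S ∪ u.toFinset}
                ≤ ((S ∪ u.toFinset).card : ℝ≥0∞) / n := measure_G_mem hG hn q₀ _
              _ ≤ p := by
                  rw [hp]
                  refine ENNReal.div_le_div_right (Nat.cast_le.2 ?_) _
                  calc (S ∪ u.toFinset).card ≤ S.card + u.toFinset.card :=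
                        Finset.card_union_le _ _
                    _ ≤ S.card + u.length := by
                        have := u.toFinset_card_le
                        omega
                    _ ≤ M := by rw [hulen]; exact hcard'
        · -- impossible slice
          have hEu3 : E ∩ f ⁻¹' {u} = ∅ := by
            rw [hEu u]
            ext ω
            simp only [Set.mem_inter_iff, Set.mem_setOf_eq, Set.mem_empty_iff_false,
              iff_false, not_and]
            intro h1 _
            split at h1 <;> omega
          rw [hEu3, measure_empty]
          exact zero_le
    -- sum the bounds
    have hsum1 : ∀ (y' : ℕ), (∑' u : List ℕ, (if y' ≤ b u then 1 else 0) * μ (f ⁻¹' {u}))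
        = μ {ω | y' ≤ listBadCount S (L'.map (fun x => G x ω))} := by
      intro y'
      rw [partition_tsum μ f {ω | y' ≤ listBadCount S (L'.map (fun x => G x ω))}
        (fun u => (hmeasE L' y').inter (hmeasf L' u))]
      refine tsum_congr fun u => ?_
      by_cases hcu : y' ≤ b u
      · rw [if_pos hcu, one_mul]
        congr 1
        ext ω
        simp only [Set.mem_inter_iff, Set.mem_setOf_eq, Set.mem_preimage,
          Set.mem_singleton_iff]
        constructor
        · rintro hωu
          exact ⟨by rw [show L'.map (fun x => G x ω) = u from hωu]; exact hcu, hωu⟩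
        · rintro ⟨_, h2⟩; exact h2
      · rw [if_neg hcu, zero_mul]
        symm
        rw [show ({ω : Ωs | y' ≤ listBadCount S (L'.map (fun x => G x ω))} ∩ f ⁻¹' {u}) = ∅ by
          ext ω
          simp only [Set.mem_inter_iff, Set.mem_setOf_eq, Set.mem_preimage,
            Set.mem_singleton_iff, Set.mem_empty_iff_false, iff_false, not_and]
          intro h1 h2
          rw [show L'.map (fun x => G x ω) = u from h2] at h1
          exact hcu h1]
        exact measure_empty
    calc μ E = ∑' u : List ℕ, μ (E ∩ f ⁻¹' {u}) := hpart
      _ ≤ ∑' u : List ℕ, (q * ((if y ≤ b u then 1 else 0) * μ (f ⁻¹' {u}))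
            + p * ((if y - 1 ≤ b u then 1 else 0) * μ (f ⁻¹' {u}))) :=
          ENNReal.tsum_le_tsum hbound
      _ = q * (∑' u : List ℕ, (if y ≤ b u then 1 else 0) * μ (f ⁻¹' {u}))
          + p * (∑' u : List ℕ, (if y - 1 ≤ b u then 1 else 0) * μ (f ⁻¹' {u})) := by
          rw [ENNReal.tsum_add, ENNReal.tsum_mul_left, ENNReal.tsum_mul_left]
      _ ≤ q * W p q L'.length y + p * W p q L'.length (y-1) := by
          rw [hsum1 y, hsum1 (y-1)]
          exact add_le_add (mul_le_mul_right (ih y hnd' hcard') q)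
            (mul_le_mul_right (ih (y-1) hnd' hcard') p)
      _ = W p q (q₀ :: L').length y := by
          rw [List.length_cons]
          rfl


-- ===== positions as functions of the driver =====

open Classical in
noncomputable def posAux (M : ℕ) (g : ℕ × ℕ → ℕ) : ℕ → ℕ → ℕ
  | 0, _ => 0
  | t + 1, i =>
    if ∀ j, j < M → j ≠ i → posAux M g t j ≠ posAux M g t i then posAux M g t i
    else g (t, i)

lemma pos_eq_posAux {Ωs : Type} (M : ℕ) (G : ℕ × ℕ → Ωs → ℕ) (ω : Ωs) :
    ∀ t i, pos M G ω t i = posAux M (fun x => G x ω) t i := by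
  intro t
  induction t with
  | zero => intro i; rfl
  | succ t ih =>
    intro i
    show (if ∀ j, j < M → j ≠ i → pos M G ω t j ≠ pos M G ω t i then pos M G ω t i
        else G (t, i) ω) = (if ∀ j, j < M → j ≠ i → posAux M (fun x => G x ω) t j
          ≠ posAux M (fun x => G x ω) t i then posAux M (fun x => G x ω) t i else G (t, i) ω)
    simp only [ih]

lemma posAux_congr (M : ℕ) (g g' : ℕ × ℕ → ℕ) : ∀ (t : ℕ),
    (∀ x : ℕ × ℕ, x.1 < t → x.2 < M → g x = g' x) →
    ∀ i, i < M → posAux M g t i = posAux M g' t i := by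
  intro t
  induction t with
  | zero => intro _ i _; rfl
  | succ t ih =>
    intro hagree i hi
    have hag' : ∀ x : ℕ×ℕ, x.1 < t → x.2 < M → g x = g' x :=
      fun x h1 h2 => hagree x (by omega) h2
    have hIH : ∀ j, j < M → posAux M g t j = posAux M g' t j := fun j hj => ih hag' j hj
    have hcond : (∀ j, j < M → j ≠ i → posAux M g t j ≠ posAux M g t i)
        ↔ (∀ j, j < M → j ≠ i → posAux M g' t j ≠ posAux M g' t i) := by
      constructor <;> intro h j hj hji
      · rw [← hIH j hj, ← hIH i hi]; exact h j hj hji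
      · rw [hIH j hj, hIH i hi]; exact h j hj hji
    show (if ∀ j, j < M → j ≠ i → posAux M g t j ≠ posAux M g t i then posAux M g t i
        else g (t, i)) = (if ∀ j, j < M → j ≠ i → posAux M g' t j ≠ posAux M g' t i
          then posAux M g' t i else g' (t, i))
    by_cases hc : ∀ j, j < M → j ≠ i → posAux M g t j ≠ posAux M g t i
    · rw [if_pos hc, if_pos (hcond.1 hc), hIH i hi]
    · rw [if_neg hc, if_neg (fun h => hc (hcond.2 h))]
      exact hagree (t,i) (by omega) hi

noncomputable def pad (M : ℕ) (c : Fin M → ℕ) : ℕ → ℕ :=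
  fun i => if h : i < M then c ⟨i, h⟩ else 0

noncomputable def conf {Ωs : Type} (M : ℕ) (G : ℕ × ℕ → Ωs → ℕ) (s : ℕ) :
    Ωs → (Fin M → ℕ) := fun ω i => pos M G ω s i

-- ===== congruence lemmas =====

lemma happyP_congr (M : ℕ) {c₁ c₂ : ℕ → ℕ} (h : ∀ j, j < M → c₁ j = c₂ j) {i : ℕ}
    (hi : i < M) : happyP M c₁ i ↔ happyP M c₂ i := by
  unfold happyP
  constructor <;> intro hh j hj hji
  · rw [← h j hj, ← h i hi]; exact hh j hj hji
  · rw [h j hj, h i hi]; exact hh j hj hji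

lemma uc_congr (M : ℕ) {c₁ c₂ : ℕ → ℕ} (h : ∀ j, j < M → c₁ j = c₂ j) :
    uc M c₁ = uc M c₂ := by
  unfold uc
  congr 1
  ext i
  simp only [mem_filter, Finset.mem_range, and_congr_right_iff]
  intro hi
  constructor <;> rintro ⟨j, hj, hji, hcc⟩
  · exact ⟨j, hj, hji, by rw [← h j hj, ← h i hi]; exact hcc⟩
  · exact ⟨j, hj, hji, by rw [h j hj, h i hi]; exact hcc⟩

lemma movers_congr (M : ℕ) {c₁ c₂ : ℕ → ℕ} (h : ∀ j, j < M → c₁ j = c₂ j) :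
    movers M c₁ = movers M c₂ := by
  unfold movers
  ext i
  simp only [mem_filter, Finset.mem_range, and_congr_right_iff]
  intro hi
  rw [happyP_congr M h hi]

lemma Sset_congr (M : ℕ) {c₁ c₂ : ℕ → ℕ} (h : ∀ j, j < M → c₁ j = c₂ j) :
    Sset M c₁ = Sset M c₂ := by
  unfold Sset
  ext v
  simp only [Finset.mem_image, mem_filter, Finset.mem_range]
  constructor <;> rintro ⟨j, ⟨hj, hhap⟩, rfl⟩
  · exact ⟨j, ⟨hj, (happyP_congr M h hj).1 hhap⟩, (h j hj).symm⟩
  · exact ⟨j, ⟨hj, (happyP_congr M h hj).2 hhap⟩, h j hj⟩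

lemma nextC_congr (M : ℕ) {c₁ c₂ w : ℕ → ℕ} (h : ∀ j, j < M → c₁ j = c₂ j) :
    ∀ i, i < M → nextC M c₁ w i = nextC M c₂ w i := by
  intro i hi
  unfold nextC
  by_cases hc : happyP M c₁ i
  · rw [if_pos hc, if_pos ((happyP_congr M h hi).1 hc), h i hi]
  · rw [if_neg hc, if_neg (fun hc2 => hc ((happyP_congr M h hi).2 hc2))]

lemma badF_congr (M : ℕ) {c₁ c₂ : ℕ → ℕ} (w : ℕ → ℕ) (h : ∀ j, j < M → c₁ j = c₂ j) :
    badF M c₁ w = badF M c₂ w := by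
  unfold badF
  rw [Sset_congr M h, movers_congr M h]

-- ===== measurability =====

lemma measurableSet_prod_nat (s : Set (ℕ×ℕ)) : MeasurableSet s := by
  refine measurableSet_all (fun x => ?_) s
  obtain ⟨a, b⟩ := x
  rw [show ({(a,b)} : Set (ℕ×ℕ)) = ({a} : Set ℕ) ×ˢ ({b} : Set ℕ) by
    ext ⟨u,v⟩; simp [Prod.ext_iff]]
  exact (measNat _).prod (measNat _)

lemma measurable_pos {Ωs : Type} [MeasurableSpace Ωs] (M : ℕ) (G : ℕ × ℕ → Ωs → ℕ)
    (hm : ∀ q, Measurable (G q)) : ∀ (t : ℕ) (i : ℕ),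
    Measurable (fun ω : Ωs => pos M G ω t i) := by
  intro t
  induction t with
  | zero => intro i; exact measurable_const
  | succ t ih =>
    intro i
    have hform : (fun ω : Ωs => pos M G ω (t+1) i)
        = fun ω => if (∀ j, j < M → j ≠ i → pos M G ω t j ≠ pos M G ω t i)
            then pos M G ω t i else G (t,i) ω := rfl
    rw [hform]
    refine Measurable.ite ?_ (ih i) (hm (t,i))
    have : {ω : Ωs | ∀ j, j < M → j ≠ i → pos M G ω t j ≠ pos M G ω t i}
        = ⋂ j : ℕ, {ω : Ωs | j < M → j ≠ i → pos M G ω t j ≠ pos M G ω t i} := by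
      ext ω; simp [Set.mem_iInter]
    rw [this]
    refine MeasurableSet.iInter fun j => ?_
    by_cases hj : j < M ∧ j ≠ i
    · have heq : {ω : Ωs | j < M → j ≠ i → pos M G ω t j ≠ pos M G ω t i}
          = (fun ω => (pos M G ω t j, pos M G ω t i)) ⁻¹' {x : ℕ×ℕ | x.1 ≠ x.2} := by
        ext ω
        simp only [Set.mem_setOf_eq, Set.mem_preimage]
        constructor
        · intro h; exact h hj.1 hj.2
        · intro h _ _; exact h
      rw [heq]
      exact ((ih j).prodMk (ih i)) (measurableSet_prod_nat _)
    · have heq : {ω : Ωs | j < M → j ≠ i → pos M G ω t j ≠ pos M G ω t i} = Set.univ := by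
        ext ω
        simp only [Set.mem_setOf_eq, Set.mem_univ, iff_true]
        intro h1 h2
        exact absurd ⟨h1, h2⟩ hj
      rw [heq]
      exact MeasurableSet.univ

lemma measurable_conf {Ωs : Type} [MeasurableSpace Ωs] (M : ℕ) (G : ℕ × ℕ → Ωs → ℕ)
    (hm : ∀ q, Measurable (G q)) (s : ℕ) : Measurable (conf M G s) :=
  measurable_pi_lambda _ fun i => measurable_pos M G hm s i

lemma pad_conf_eq {Ωs : Type} (M : ℕ) (G : ℕ × ℕ → Ωs → ℕ) (s : ℕ) (ω : Ωs)
    {j : ℕ} (hj : j < M) : pad M (conf M G s ω) j = pos M G ω s j := by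
  rw [pad, dif_pos hj]; rfl

lemma U_eq_uc_pad {Ωs : Type} (M : ℕ) (G : ℕ × ℕ → Ωs → ℕ) (t : ℕ) (ω : Ωs) :
    U M G ω t = uc M (pad M (conf M G t ω)) := by
  have h0 : U M G ω t = uc M (fun i => pos M G ω t i) := rfl
  rw [h0]
  exact uc_congr M (fun j hj => (pad_conf_eq M G t ω hj).symm)

lemma measurable_U {Ωs : Type} [MeasurableSpace Ωs] (M : ℕ) (G : ℕ × ℕ → Ωs → ℕ)
    (hm : ∀ q, Measurable (G q)) (t : ℕ) : Measurable (fun ω : Ωs => U M G ω t) := by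
  have : (fun ω : Ωs => U M G ω t)
      = (fun v : Fin M → ℕ => uc M (pad M v)) ∘ conf M G t := by
    funext ω
    exact U_eq_uc_pad M G t ω
  rw [this]
  exact (measurable_from_pi_nat _).comp (measurable_conf M G hm t)

-- ===== the configuration event as a preimage =====

lemma conf_event {Ωs : Type} [MeasurableSpace Ωs] (M : ℕ) (G : ℕ × ℕ → Ωs → ℕ)
    (s : ℕ) (c : Fin M → ℕ) :
    (conf M G s) ⁻¹' {c}
      = rowMap G ((Finset.range s) ×ˢ (Finset.range M)) ⁻¹'
          {h | ∀ i : Fin M,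
            posAux M (restMap ((Finset.range s) ×ˢ (Finset.range M)) h) s (i:ℕ) = c i} := by
  set Sf := (Finset.range s) ×ˢ (Finset.range M) with hSf
  have hkey : ∀ (ω : Ωs) (i : Fin M),
      posAux M (restMap Sf (rowMap G Sf ω)) s (i:ℕ) = pos M G ω s (i:ℕ) := by
    intro ω i
    rw [pos_eq_posAux]
    refine posAux_congr M _ _ s (fun x h1 h2 => ?_) (i:ℕ) i.isLt
    exact restMap_rowMap G Sf ω (by
      rw [hSf, Finset.mem_product, Finset.mem_range, Finset.mem_range]
      exact ⟨h1, h2⟩)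
  ext ω
  simp only [Set.mem_preimage, Set.mem_singleton_iff, Set.mem_setOf_eq]
  constructor
  · intro h i
    rw [hkey ω i]
    exact congrFun h i
  · intro h
    funext i
    rw [show conf M G s ω i = pos M G ω s (i:ℕ) from rfl, ← hkey ω i]
    exact h i

-- ===== the one-step domination =====

lemma step {Ωs : Type} [MeasurableSpace Ωs] {n : ℕ} (hn : 0 < n) {M : ℕ} (hMn : M ≤ n)
    {μ : Measure Ωs} {G : ℕ × ℕ → Ωs → ℕ} (hG : IsDriver n μ G) (s z : ℕ) :
    μ {ω : Ωs | z ≤ U M G ω (s+1)}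
      ≤ ∑' k : ℕ, μ {ω : Ωs | U M G ω s = k}
          * W ((M:ℝ≥0∞)/n) (((n-M:ℕ):ℝ≥0∞)/n) k ((z+1)/2) := by
  set p : ℝ≥0∞ := (M:ℝ≥0∞)/n with hp
  set q : ℝ≥0∞ := ((n-M:ℕ):ℝ≥0∞)/n with hq
  set y : ℕ := (z+1)/2 with hy
  set E : Set Ωs := {ω : Ωs | z ≤ U M G ω (s+1)} with hE
  have hmeasE : MeasurableSet E :=
    measurable_U M G hG.meas (s+1) (measNat {x | z ≤ x})
  have hmeasconf : ∀ c : Fin M → ℕ, MeasurableSet ((conf M G s) ⁻¹' {c}) :=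
    fun c => measurable_conf M G hG.meas s (measurableSet_pi_nat {c})
  have hpart : μ E = ∑' c : Fin M → ℕ, μ (E ∩ (conf M G s) ⁻¹' {c}) :=
    partition_tsum μ (conf M G s) E (fun c => hmeasE.inter (hmeasconf c))
  -- per-configuration analysis
  have hperc : ∀ c : Fin M → ℕ, μ (E ∩ (conf M G s) ⁻¹' {c})
      ≤ μ ((conf M G s) ⁻¹' {c}) * W p q (uc M (pad M c)) y := by
    intro c
    set cb : ℕ → ℕ := pad M c with hcb
    set lst : List ℕ := ((movers M cb).sort (· ≤ ·)).reverse with hlst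
    set Lst : List (ℕ×ℕ) := lst.map (fun i => (s, i)) with hLst
    have hsorted : lst.Pairwise (· > ·) := by
      rw [hlst, List.pairwise_reverse]
      exact (Finset.sortedLT_sort (movers M cb)).pairwise.imp (fun h => h)
    have hlstF : lst.toFinset = movers M cb := by
      rw [hlst, List.toFinset_reverse, Finset.sort_toFinset]
    have hlen : lst.length = uc M cb := by
      rw [hlst, List.length_reverse, Finset.length_sort, uc_eq_card_movers]
    -- the bad event
    set B : Set Ωs := {ω : Ωs | y ≤ listBadCount (Sset M cb) (Lst.map (fun x => G x ω))}
      with hB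
    -- inclusion
    have hsub : E ∩ (conf M G s) ⁻¹' {c} ⊆ B ∩ (conf M G s) ⁻¹' {c} := by
      rintro ω ⟨hωE, hωc⟩
      rw [Set.mem_preimage, Set.mem_singleton_iff] at hωc
      refine ⟨?_, by rw [Set.mem_preimage, Set.mem_singleton_iff]; exact hωc⟩
      rw [hE, Set.mem_setOf_eq] at hωE
      -- rewrite U at s+1
      have hagree : ∀ j, j < M → pos M G ω s j = cb j := by
        intro j hj
        rw [hcb, ← hωc]
        exact (pad_conf_eq M G s ω hj).symm
      have hpos_succ : ∀ i, i < M → pos M G ω (s+1) i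
          = nextC M (fun j => pos M G ω s j) (fun j => G (s,j) ω) i := by
        intro i _
        show (if ∀ j, j < M → j ≠ i → pos M G ω s j ≠ pos M G ω s i then pos M G ω s i
          else G (s,i) ω) = _
        rw [nextC]
        exact if_congr Iff.rfl rfl rfl
      have hU0 : U M G ω (s+1) = uc M (fun i => pos M G ω (s+1) i) := rfl
      have hU2 : U M G ω (s+1) = uc M (nextC M cb (fun j => G (s,j) ω)) := by
        rw [hU0, uc_congr M hpos_succ]
        exact uc_congr M (fun j hj => nextC_congr M hagree j hj)
      have hdet : U M G ω (s+1) ≤ 2 * (badF M cb (fun j => G (s,j) ω)).card := by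
        rw [hU2]; exact detD M cb _
      have hbadeq : (badF M cb (fun j => G (s,j) ω)).card
          = listBadCount (Sset M cb) (Lst.map (fun x => G x ω)) := by
        have h1 : (badF M cb (fun j => G (s,j) ω)).card
            = listBadCount (Sset M cb) (lst.map (fun j => G (s,j) ω)) := by
          rw [badF, ← badFin_card_eq (Sset M cb) _ lst hsorted, hlstF]
        rw [h1, hLst, List.map_map]
        rfl
      rw [hB, Set.mem_setOf_eq, ← hbadeq, hy]
      omega
    -- independence
    have hTsub : ∀ x ∈ Lst, x ∈ Lst.toFinset := fun x hx => List.mem_toFinset.2 hx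
    have hdisj : Disjoint ((Finset.range s) ×ˢ (Finset.range M)) Lst.toFinset := by
      rw [Finset.disjoint_left]
      intro a ha hb
      rw [Finset.mem_product, Finset.mem_range] at ha
      rw [List.mem_toFinset, hLst, List.mem_map] at hb
      obtain ⟨i, _, rfl⟩ := hb
      omega
    have hBpre : B = rowMap G Lst.toFinset ⁻¹'
        {h | y ≤ listBadCount (Sset M cb) (Lst.map (restMap Lst.toFinset h))} := by
      have hmap : ∀ ω : Ωs, Lst.map (restMap Lst.toFinset (rowMap G Lst.toFinset ω))
          = Lst.map (fun x => G x ω) := fun ω => List.map_congr_left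
            (fun x hx => restMap_rowMap G Lst.toFinset ω (List.mem_toFinset.2 hx))
      ext ω
      simp only [hB, Set.mem_preimage, Set.mem_setOf_eq]
      rw [hmap ω]
    have hindep : μ (B ∩ (conf M G s) ⁻¹' {c})
        = μ ((conf M G s) ⁻¹' {c}) * μ B := by
      rw [conf_event M G s c, hBpre, Set.inter_comm]
      exact indep_pre hG hdisj _ _
    -- the SEQ bound on μ B
    have hnodup : Lst.Nodup := by
      rw [hLst]
      refine List.Nodup.map (fun a b hab => (Prod.ext_iff.1 hab).2) ?_
      rw [hlst]
      exact List.nodup_reverse.2 (Finset.sort_nodup _ _)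
    have hLlen : Lst.length = uc M cb := by rw [hLst, List.length_map, hlen]
    have hcardS : (Sset M cb).card + Lst.length ≤ M := by
      rw [hLlen, uc_eq_card_movers]
      have h1 : (Sset M cb).card ≤ ((range M).filter (happyP M cb)).card := by
        rw [Sset]; exact Finset.card_image_le
      have h2 : ((range M).filter (happyP M cb)).card
          + ((range M).filter (fun i => ¬ happyP M cb i)).card = M := by
        rw [Finset.card_filter_add_card_filter_not, Finset.card_range]
      rw [movers]
      omega
    have hseqB : μ B ≤ W p q (uc M cb) y := by
      rw [← hLlen]
      exact seq hn hMn hG (Sset M cb) Lst y hnodup hcardS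
    calc μ (E ∩ (conf M G s) ⁻¹' {c}) ≤ μ (B ∩ (conf M G s) ⁻¹' {c}) := measure_mono hsub
      _ = μ ((conf M G s) ⁻¹' {c}) * μ B := hindep
      _ ≤ μ ((conf M G s) ⁻¹' {c}) * W p q (uc M cb) y := mul_le_mul_right hseqB _
  -- regroup by the value of `uc`
  have hregroup : (∑' c : Fin M → ℕ, μ ((conf M G s) ⁻¹' {c}) * W p q (uc M (pad M c)) y)
      = ∑' k : ℕ, μ {ω : Ωs | U M G ω s = k} * W p q k y := by
    have h1 : ∀ c : Fin M → ℕ, μ ((conf M G s) ⁻¹' {c}) * W p q (uc M (pad M c)) y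
        = ∑' k : ℕ, (if k = uc M (pad M c) then μ ((conf M G s) ⁻¹' {c}) * W p q k y
            else 0) := by
      intro c
      rw [show (∑' k : ℕ, (if k = uc M (pad M c)
          then μ ((conf M G s) ⁻¹' {c}) * W p q k y else 0))
        = ∑' k : ℕ, (if k = uc M (pad M c)
            then μ ((conf M G s) ⁻¹' {c}) * W p q (uc M (pad M c)) y else 0) from
        tsum_congr fun k => by
          by_cases hk : k = uc M (pad M c)
          · rw [if_pos hk, if_pos hk, hk]
          · rw [if_neg hk, if_neg hk]]
      exact (tsum_ite_eq (uc M (pad M c))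
          (fun _ => μ ((conf M G s) ⁻¹' {c}) * W p q (uc M (pad M c)) y)).symm
    rw [tsum_congr h1, ENNReal.tsum_comm]
    refine tsum_congr fun k => ?_
    have h2 : μ {ω : Ωs | U M G ω s = k}
        = ∑' c : Fin M → ℕ, μ ({ω : Ωs | U M G ω s = k} ∩ (conf M G s) ⁻¹' {c}) :=
      partition_tsum μ (conf M G s) _ (fun c =>
        (measurable_U M G hG.meas s (measNat {k})).inter (hmeasconf c))
    have h3 : ∀ c : Fin M → ℕ, {ω : Ωs | U M G ω s = k} ∩ (conf M G s) ⁻¹' {c}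
        = if k = uc M (pad M c) then (conf M G s) ⁻¹' {c} else ∅ := by
      intro c
      by_cases hk : k = uc M (pad M c)
      · rw [if_pos hk]
        apply Set.Subset.antisymm Set.inter_subset_right
        intro ω hωc
        refine ⟨?_, hωc⟩
        rw [Set.mem_preimage, Set.mem_singleton_iff] at hωc
        rw [Set.mem_setOf_eq, U_eq_uc_pad M G s ω, hωc, hk]
      · rw [if_neg hk]
        rw [Set.eq_empty_iff_forall_notMem]
        rintro ω ⟨hωU, hωc⟩
        rw [Set.mem_preimage, Set.mem_singleton_iff] at hωc
        rw [Set.mem_setOf_eq, U_eq_uc_pad M G s ω, hωc] at hωU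
        exact hk hωU.symm
    have h4 : (∑' c : Fin M → ℕ, μ ({ω : Ωs | U M G ω s = k} ∩ (conf M G s) ⁻¹' {c}))
        = ∑' c : Fin M → ℕ, (if k = uc M (pad M c) then μ ((conf M G s) ⁻¹' {c}) else 0) :=
      tsum_congr fun c => by rw [h3 c]; split <;> simp
    rw [h2, h4, ← ENNReal.tsum_mul_right]
    exact tsum_congr fun c => by by_cases hk : k = uc M (pad M c) <;> simp [hk]
  calc μ E = ∑' c : Fin M → ℕ, μ (E ∩ (conf M G s) ⁻¹' {c}) := hpart
    _ ≤ ∑' c : Fin M → ℕ, μ ((conf M G s) ⁻¹' {c}) * W p q (uc M (pad M c)) y :=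
        ENNReal.tsum_le_tsum hperc
    _ = ∑' k : ℕ, μ {ω : Ωs | U M G ω s = k} * W p q k y := hregroup


-- ===== tails via partitions =====

lemma tail_partition {Ωs : Type} [MeasurableSpace Ωs] (μ : Measure Ωs) (f : Ωs → ℕ)
    (hf : Measurable f) (y : ℕ) :
    μ {ω | y ≤ f ω} = ∑' k : ℕ, μ {ω | f ω = k} * (if y ≤ k then 1 else 0) := by
  have h1 : μ {ω | y ≤ f ω} = ∑' k : ℕ, μ ({ω | y ≤ f ω} ∩ f ⁻¹' {k}) :=
    partition_tsum μ f _ (fun k => (hf (measNat {x | y ≤ x})).inter (hf (measNat {k})))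
  rw [h1]
  refine tsum_congr fun k => ?_
  have h2 : {ω : Ωs | y ≤ f ω} ∩ f ⁻¹' {k} = if y ≤ k then f ⁻¹' {k} else ∅ := by
    by_cases hy : y ≤ k
    · rw [if_pos hy]
      apply Set.Subset.antisymm Set.inter_subset_right
      intro ω hω
      rw [Set.mem_preimage, Set.mem_singleton_iff] at hω
      exact ⟨by rw [Set.mem_setOf_eq, hω]; exact hy, hω⟩
    · rw [if_neg hy, Set.eq_empty_iff_forall_notMem]
      rintro ω ⟨h3, h4⟩
      rw [Set.mem_preimage, Set.mem_singleton_iff] at h4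
      rw [Set.mem_setOf_eq, h4] at h3
      exact hy h3
  rw [h2]
  have h3 : f ⁻¹' {k} = {ω | f ω = k} := rfl
  split <;> simp [h3]

lemma sum_eq_one {Ωs : Type} [MeasurableSpace Ωs] (μ : Measure Ωs)
    [IsProbabilityMeasure μ] (f : Ωs → ℕ) (hf : Measurable f) :
    (∑' k : ℕ, μ {ω | f ω = k}) = 1 := by
  have h1 : μ (Set.univ : Set Ωs) = ∑' k : ℕ, μ (Set.univ ∩ f ⁻¹' {k}) :=
    partition_tsum μ f _ (fun k => MeasurableSet.univ.inter (hf (measNat {k})))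
  rw [measure_univ] at h1
  calc (∑' k : ℕ, μ {ω | f ω = k})
      = ∑' k : ℕ, μ (Set.univ ∩ f ⁻¹' {k}) :=
        tsum_congr fun k => by rw [Set.univ_inter]; rfl
    _ = 1 := h1.symm


/-- Lemma 2.7: the binomial process `Z_t(U_{t₀}, ε)` stochastically
dominates `U_{t₀+t}`; the law of `Z_t(U_{t₀}, ε)` is the mixture over the value of
`U_{t₀}` of the binomial process laws. -/
theorem statement6 (n : ℕ) (hn : 1 ≤ n) (ε : ℝ) (hε : |ε| < 1) (M : ℕ) (hM2 : 2 ≤ M)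
    (hM : (M : ℝ) = (1 + ε) * n / 2)
    (Ωs : Type) [MeasurableSpace Ωs] (μ : Measure Ωs) (G : ℕ × ℕ → Ωs → ℕ)
    (hG : IsDriver n μ G) (t₀ t : ℕ) :
    ∀ z : ℕ,
      μ {ω | z ≤ U M G ω (t₀ + t)} ≤
        ∑' m : ℕ,
          μ {ω | U M G ω t₀ = m} *
            (Zpmf (ENNReal.ofReal ((1 + ε) / 2)) t m).toMeasure {x | z ≤ x} := by
  classical
  intro z
  haveI := hG.isProb
  have hn0 : 0 < n := hn
  have hnR : (0:ℝ) < n := by exact_mod_cast hn0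
  have hMn : M ≤ n := by
    have h1 : (M:ℝ) < n := by
      rw [hM]
      have : (1 + ε) / 2 < 1 := by cases abs_lt.1 hε; linarith
      calc (1 + ε) * n / 2 = ((1+ε)/2) * n := by ring
        _ < 1 * n := by exact mul_lt_mul_of_pos_right this hnR
        _ = n := one_mul _
    exact_mod_cast h1.le
  set pR : ℝ≥0∞ := ENNReal.ofReal ((1 + ε) / 2) with hpR
  set p : ℝ≥0∞ := (M:ℝ≥0∞)/n with hp
  set q : ℝ≥0∞ := ((n-M:ℕ):ℝ≥0∞)/n with hq
  have hnn : (n:ℝ≥0∞) ≠ 0 := by exact_mod_cast Nat.cast_ne_zero.2 hn0.ne'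
  have hnt : (n:ℝ≥0∞) ≠ ⊤ := ENNReal.natCast_ne_top n
  have hpq : p + q = 1 := by
    rw [hp, hq, ENNReal.div_add_div_same]
    rw [show ((M:ℝ≥0∞) + ((n-M:ℕ):ℝ≥0∞)) = ((n:ℕ):ℝ≥0∞) by
      rw [← Nat.cast_add]; congr 1; omega]
    exact ENNReal.div_self hnn hnt
  have hpReq : pR = p := by
    rw [hpR, hp]
    have h1 : (1 + ε) / 2 = (M:ℝ) / n := by
      rw [hM]; field_simp
    rw [h1, ENNReal.ofReal_div_of_pos hnR, ENNReal.ofReal_natCast, ENNReal.ofReal_natCast]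
  have hp1 : p ≤ 1 := by
    rw [hp]
    calc (M:ℝ≥0∞)/n ≤ (n:ℝ≥0∞)/n := ENNReal.div_le_div_right (Nat.cast_le.2 hMn) _
      _ = 1 := ENNReal.div_self hnn hnt
  have hpt : p ≠ ⊤ := (lt_of_le_of_lt hp1 ENNReal.one_lt_top).ne
  have hq_eq : 1 - p = q := by
    refine ENNReal.sub_eq_of_eq_add hpt ?_
    rw [add_comm, ← hpq]
  have hmeasUU : ∀ t' : ℕ, Measurable (fun ω : Ωs => U M G ω t') :=
    fun t' => measurable_U M G hG.meas t'
  have hsetU : ∀ (t' : ℕ) (m : ℕ), (fun ω : Ωs => U M G ω t') ⁻¹' {m}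
      = {ω : Ωs | U M G ω t' = m} := fun _ _ => rfl
  rw [hpReq]
  induction t generalizing z with
  | zero =>
    -- Zpmf 0 is a point mass
    have hZ : ∀ m : ℕ, (Zpmf p 0 m).toMeasure {x : ℕ | z ≤ x}
        = if z ≤ m then 1 else 0 := fun m => Zpmf_tail_zero p m z
    calc μ {ω : Ωs | z ≤ U M G ω (t₀ + 0)}
        = ∑' m : ℕ, μ {ω : Ωs | U M G ω (t₀+0) = m} * (if z ≤ m then 1 else 0) :=
          tail_partition μ _ (hmeasUU (t₀+0)) z
      _ ≤ ∑' m : ℕ, μ {ω : Ωs | U M G ω t₀ = m} * (Zpmf p 0 m).toMeasure {x : ℕ | z ≤ x} := by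
          refine ENNReal.tsum_le_tsum fun m => ?_
          rw [hZ m]
          exact le_rfl
  | succ t ih =>
    have hstep := step hn0 hMn hG (t₀ + t) z
    set y : ℕ := (z+1)/2 with hy
    -- identify the binomial tails
    have hbtail : ∀ k : ℕ, (binStep p k).toMeasure {x : ℕ | z ≤ x} = W p q k y := by
      intro k
      rw [binStep_tail p hp1 k z, ← hy, W_eq_Tb hpq, hq_eq]
    have hZtail : ∀ (m : ℕ) (y' : ℕ), (Zpmf p t m).toMeasure {x : ℕ | y' ≤ x}
        = ∑' k : ℕ, (Zpmf p t m) k * (if y' ≤ k then 1 else 0) := by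
      intro m y'
      rw [PMF.toMeasure_apply _ (measNat _)]
      refine tsum_congr fun k => ?_
      rw [Set.indicator_apply]
      simp only [Set.mem_setOf_eq]
      split <;> simp
    -- apply the layer-cake lemma
    have hlc : (∑' k : ℕ, μ {ω : Ωs | U M G ω (t₀+t) = k} * W p q k y)
        ≤ ∑' k : ℕ, (∑' m : ℕ, μ {ω : Ωs | U M G ω t₀ = m} * (Zpmf p t m) k) * W p q k y := by
      refine layercake _ _ (fun k => W p q k y) ?_ ?_ ?_ ?_
      · exact monotone_nat_of_le_succ (fun k => W_mono_k hpq k y)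
      · exact fun k => (lt_of_le_of_lt (W_le_one hpq k y) ENNReal.one_lt_top).ne
      · -- equal total masses
        rw [sum_eq_one μ _ (hmeasUU (t₀+t))]
        rw [ENNReal.tsum_comm]
        rw [show (∑' m : ℕ, ∑' k : ℕ, μ {ω : Ωs | U M G ω t₀ = m} * (Zpmf p t m) k)
            = ∑' m : ℕ, μ {ω : Ωs | U M G ω t₀ = m} * (∑' k : ℕ, (Zpmf p t m) k) from
          tsum_congr fun m => ENNReal.tsum_mul_left]
        rw [show (∑' m : ℕ, μ {ω : Ωs | U M G ω t₀ = m} * (∑' k : ℕ, (Zpmf p t m) k))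
            = ∑' m : ℕ, μ {ω : Ωs | U M G ω t₀ = m} from
          tsum_congr fun m => by rw [(Zpmf p t m).tsum_coe, mul_one]]
        rw [sum_eq_one μ _ (hmeasUU t₀)]
      · -- tail domination from the inductive hypothesis
        intro y'
        rw [← tail_partition μ _ (hmeasUU (t₀+t)) y']
        refine le_trans (ih y') ?_
        rw [show (∑' k : ℕ, (∑' m : ℕ, μ {ω : Ωs | U M G ω t₀ = m} * (Zpmf p t m) k)
              * (if y' ≤ k then 1 else 0))
            = ∑' k : ℕ, ∑' m : ℕ, μ {ω : Ωs | U M G ω t₀ = m}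
              * ((Zpmf p t m) k * (if y' ≤ k then 1 else 0)) from
          tsum_congr fun k => by rw [← ENNReal.tsum_mul_right]; exact tsum_congr fun m => by ring]
        rw [ENNReal.tsum_comm]
        refine le_of_eq (tsum_congr fun m => ?_)
        rw [hZtail m y', ENNReal.tsum_mul_left]
    -- conclude
    calc μ {ω : Ωs | z ≤ U M G ω (t₀ + (t+1))}
        = μ {ω : Ωs | z ≤ U M G ω ((t₀ + t) + 1)} := by rw [show t₀ + (t+1) = (t₀+t)+1 by omega]
      _ ≤ ∑' k : ℕ, μ {ω : Ωs | U M G ω (t₀+t) = k} * W p q k y := hstep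
      _ ≤ ∑' k : ℕ, (∑' m : ℕ, μ {ω : Ωs | U M G ω t₀ = m} * (Zpmf p t m) k) * W p q k y :=
          hlc
      _ = ∑' m : ℕ, μ {ω : Ωs | U M G ω t₀ = m} * (Zpmf p (t+1) m).toMeasure {x : ℕ | z ≤ x} := by
          rw [show (∑' k : ℕ, (∑' m : ℕ, μ {ω : Ωs | U M G ω t₀ = m} * (Zpmf p t m) k)
                * W p q k y)
              = ∑' k : ℕ, ∑' m : ℕ, μ {ω : Ωs | U M G ω t₀ = m}
                * ((Zpmf p t m) k * W p q k y) from
            tsum_congr fun k => by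
              rw [← ENNReal.tsum_mul_right]; exact tsum_congr fun m => by ring]
          rw [ENNReal.tsum_comm]
          refine tsum_congr fun m => ?_
          rw [show (Zpmf p (t+1) m).toMeasure {x : ℕ | z ≤ x}
              = ∑' k : ℕ, (Zpmf p t m) k * W p q k y from ?_]
          · exact ENNReal.tsum_mul_left
          · rw [show Zpmf p (t+1) m = (Zpmf p t m).bind (binStep p) from rfl,
              PMF.toMeasure_bind_apply _ _ _ (measNat _)]
            exact tsum_congr fun k => by rw [hbtail k]

end Dispersion
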